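/- Let (e_k) be a sequence of unit vectors in a Hilbert space E, and let p, q be positive integers. If ∑_{k=1}^∞ |1 − ⟨e_k, e_{k+p}⟩| < ∞ and ∑_{k=1}^∞ |1 − ⟨e_k, e_{k+q}⟩| < ∞, then ∑_{k=1}^∞ |1 − ⟨e_k, e_{k+p+q}⟩| < ∞. -/

import Mathlib

theorem key_tri {E : Type*} [NormedAddCommGroup E] [InnerProductSpace ℂ E]
    (a b c : E) (ha : ‖a‖ = 1) (hb : ‖b‖ = 1) (hc : ‖c‖ = 1) :
    ‖1 - (inner ℂ a c : ℂ)‖ ≤ 2 * (‖1 - (inner ℂ a b : ℂ)‖ + ‖1 - (inner ℂ b c : ℂ)‖) := by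
  set x : ℂ := inner ℂ a b with hx
  set y : ℂ := inner ℂ b c with hy
  set u : E := a - (inner ℂ b a : ℂ) • b with hu
  set v : E := c - y • b with hv
  have hbb : (inner ℂ b b : ℂ) = 1 := by
    rw [inner_self_eq_norm_sq_to_K, hb]; norm_num
  have haa : (inner ℂ a a : ℂ) = 1 := by
    rw [inner_self_eq_norm_sq_to_K, ha]; norm_num
  have hcc : (inner ℂ c c : ℂ) = 1 := by
    rw [inner_self_eq_norm_sq_to_K, hc]; norm_num
  have huv : (inner ℂ u v : ℂ) = (inner ℂ a c : ℂ) - x * y := by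
    simp only [hu, hv, inner_sub_left, inner_sub_right, inner_smul_left, inner_smul_right, hbb,
      mul_one]
    rw [← inner_conj_symm b a]
    rw [Complex.conj_conj, ← hx, ← hy]
    ring_nf
  have hxle : ‖x‖ ≤ 1 := by
    calc ‖x‖ ≤ ‖a‖ * ‖b‖ := norm_inner_le_norm a b
    _ = 1 := by rw [ha, hb]; ring
  have hyle : ‖y‖ ≤ 1 := by
    calc ‖y‖ ≤ ‖b‖ * ‖c‖ := norm_inner_le_norm b c
    _ = 1 := by rw [hb, hc]; ring
  have huu : (inner ℂ u u : ℂ) = 1 - x * (starRingEnd ℂ) x := by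
    simp only [hu, inner_sub_left, inner_sub_right, inner_smul_left, inner_smul_right, hbb, haa,
      mul_one]
    rw [← inner_conj_symm b a]
    ring
  have hvv : (inner ℂ v v : ℂ) = 1 - y * (starRingEnd ℂ) y := by
    simp only [hv, inner_sub_left, inner_sub_right, inner_smul_left, inner_smul_right, hbb, hcc,
      mul_one]
    rw [← inner_conj_symm c b, hy]
    ring
  have hnorm : ∀ (w : E) (z : ℂ), (inner ℂ w w : ℂ) = 1 - z * (starRingEnd ℂ) z →
      ‖w‖ ^ 2 = 1 - ‖z‖ ^ 2 := by
    intro w z hw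
    have h := inner_self_eq_norm_sq (𝕜 := ℂ) w
    rw [hw, Complex.mul_conj] at h
    rw [← h]
    simp only [RCLike.re_to_complex, Complex.sub_re, Complex.one_re, Complex.ofReal_re, Complex.normSq_eq_norm_sq]
  have hun : ‖u‖ ^ 2 = 1 - ‖x‖ ^ 2 := hnorm u x huu
  have hvn : ‖v‖ ^ 2 = 1 - ‖y‖ ^ 2 := hnorm v y hvv
  set A := ‖1 - x‖ with hA
  set B := ‖1 - y‖ with hB
  have hA1 : 1 - ‖x‖ ≤ A := by
    calc 1 - ‖x‖ = ‖(1:ℂ)‖ - ‖x‖ := by norm_num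
    _ ≤ A := norm_sub_norm_le _ _
  have hB1 : 1 - ‖y‖ ≤ B := by
    calc 1 - ‖y‖ = ‖(1:ℂ)‖ - ‖y‖ := by norm_num
    _ ≤ B := norm_sub_norm_le _ _
  have hA0 : 0 ≤ A := norm_nonneg _
  have hB0 : 0 ≤ B := norm_nonneg _
  have huA : ‖u‖ ^ 2 ≤ 2 * A := by nlinarith [norm_nonneg x]
  have hvB : ‖v‖ ^ 2 ≤ 2 * B := by nlinarith [norm_nonneg y]
  have hcross : ‖(inner ℂ a c : ℂ) - x * y‖ ≤ A + B := by
    calc ‖(inner ℂ a c : ℂ) - x * y‖ = ‖(inner ℂ u v : ℂ)‖ := by rw [huv]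
    _ ≤ ‖u‖ * ‖v‖ := norm_inner_le_norm u v
    _ ≤ A + B := by nlinarith [norm_nonneg u, norm_nonneg v, sq_nonneg (A - B), sq_nonneg (‖u‖*‖v‖)]
  have hxy : ‖1 - x * y‖ ≤ A + B := by
    calc ‖1 - x * y‖ = ‖(1 - x) + x * (1 - y)‖ := by ring_nf
    _ ≤ ‖1 - x‖ + ‖x * (1 - y)‖ := norm_add_le _ _
    _ = A + ‖x‖ * B := by rw [norm_mul]
    _ ≤ A + B := by nlinarith
  calc ‖1 - (inner ℂ a c : ℂ)‖ = ‖(1 - x * y) - ((inner ℂ a c : ℂ) - x * y)‖ := by ring_nf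
  _ ≤ ‖1 - x * y‖ + ‖(inner ℂ a c : ℂ) - x * y‖ := norm_sub_le _ _
  _ ≤ (A + B) + (A + B) := add_le_add hxy hcross
  _ = 2 * (A + B) := by ring

/-- If `(e k)` is a sequence of unit vectors and both `p` and `q` are "periods", i.e.
`∑ |1 - ⟪e k, e (k+p)⟫|` and `∑ |1 - ⟪e k, e (k+q)⟫|` converge, then `p + q` is a
period as well. -/
theorem period_add {E : Type*} [NormedAddCommGroup E] [InnerProductSpace ℂ E]
    (e : ℕ → E) (he : ∀ k, ‖e k‖ = 1) (p q : ℕ) (hp : 0 < p) (hq : 0 < q)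
    (h1 : Summable fun k => ‖1 - (inner ℂ (e k) (e (k + p)) : ℂ)‖)
    (h2 : Summable fun k => ‖1 - (inner ℂ (e k) (e (k + q)) : ℂ)‖) :
    Summable fun k => ‖1 - (inner ℂ (e k) (e (k + (p + q))) : ℂ)‖ := by
  have hg : Summable fun k => ‖1 - (inner ℂ (e (k + p)) (e (k + p + q)) : ℂ)‖ :=
    (summable_nat_add_iff p).2 h2
  have hsum : Summable fun k =>
      2 * (‖1 - (inner ℂ (e k) (e (k + p)) : ℂ)‖ + ‖1 - (inner ℂ (e (k + p)) (e (k + p + q)) : ℂ)‖) :=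
    (h1.add hg).mul_left 2
  refine Summable.of_nonneg_of_le (fun k => norm_nonneg _) (fun k => ?_) hsum
  have := key_tri (e k) (e (k + p)) (e (k + (p + q))) (he k) (he _) (he _)
  simpa [Nat.add_assoc] using this
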